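/- Let K, L ≥ 2 be integers and let 0 < s1 ≤ s2 ≤ … ≤ sK ≤ 1 be offers. Define f0inv : [1,∞) → [0,1] by f0inv(y) = f_L^{−1}(y) for y ∈ [1, L] and f0inv(y) = 0 for y ≥ L, and define h : [0,1] → ℝ by h(p) = p + Σ_{i=1}^{K−1} f0inv((sK/si)·f_L(p)). Then h is continuous and strictly increasing on [0,1], h(0) = 0, h(1) ≥ 1, and consequently there exists a unique p* ∈ (0,1] with h(p*) = 1. -/

import Mathlib

/-- The function `f_L(x) = (1 - (1-x)^L)/x` for `x ∈ (0,1]`, with `f_L(0) = L`. -/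
noncomputable def fL (L : ℕ) (x : ℝ) : ℝ :=
  if x = 0 then (L:ℝ) else (1 - (1-x)^L) / x

lemma fL_eq_sum (L : ℕ) (x : ℝ) : fL L x = ∑ j ∈ Finset.range L, (1-x)^j := by
  unfold fL
  split_ifs with hx
  · subst hx; simp
  · rw [div_eq_iff hx]
    linear_combination geom_sum_mul (1-x) L

lemma fL_mem {L : ℕ} (hL : 2 ≤ L) {x : ℝ} (hx : x ∈ Set.Icc (0:ℝ) 1) :
    fL L x ∈ Set.Icc (1:ℝ) (L:ℝ) := by
  rw [fL_eq_sum]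
  constructor
  · have h0 : (0:ℕ) ∈ Finset.range L := by simp; omega
    have := Finset.single_le_sum (f := fun j => (1-x)^j)
      (fun j _ => pow_nonneg (by linarith [hx.2]) j) h0
    simpa using this
  · have : ∑ j ∈ Finset.range L, (1-x)^j ≤ ∑ _j ∈ Finset.range L, (1:ℝ) :=
      Finset.sum_le_sum (fun j _ => pow_le_one₀ (by linarith [hx.2]) (by linarith [hx.1]))
    simpa using this

lemma fL_anti {L : ℕ} (hL : 2 ≤ L) : StrictAntiOn (fL L) (Set.Icc (0:ℝ) 1) := by
  intro a ha b hb hab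
  rw [fL_eq_sum, fL_eq_sum]
  apply Finset.sum_lt_sum
  · intro j _
    exact pow_le_pow_left₀ (by linarith [hb.2]) (by linarith) j
  · refine ⟨1, by simp; omega, ?_⟩
    simpa using hab

theorem stmt10 (K L : ℕ) (hK : 2 ≤ K) (hL : 2 ≤ L)
    (s : Fin K → ℝ) (hmono : Monotone s)
    (hpos : 0 < s ⟨0, by omega⟩) (hle : s ⟨K-1, by omega⟩ ≤ 1)
    -- `finv` is the inverse of the bijection `f_L : [0,1] → [1,L]`
    (finv : ℝ → ℝ)
    (hinv1 : ∀ x ∈ Set.Icc (0:ℝ) 1, finv (fL L x) = x)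
    (hinv2 : ∀ y ∈ Set.Icc (1:ℝ) (L:ℝ), fL L (finv y) = y)
    (hinv3 : Set.MapsTo finv (Set.Icc (1:ℝ) (L:ℝ)) (Set.Icc (0:ℝ) 1))
    -- `f0inv` extends `finv` by `0` above `L`
    (f0inv : ℝ → ℝ) (hf0 : ∀ y, f0inv y = if y ≤ (L:ℝ) then finv y else 0)
    (h : ℝ → ℝ)
    (hh : ∀ p, h p = p + ∑ i : Fin (K-1),
      f0inv ((s ⟨K-1, by omega⟩ / s (Fin.castLE (by omega) i)) * fL L p)) :
    ContinuousOn h (Set.Icc 0 1) ∧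
    StrictMonoOn h (Set.Icc 0 1) ∧
    h 0 = 0 ∧
    1 ≤ h 1 ∧
    ∃! p, p ∈ Set.Ioc (0:ℝ) 1 ∧ h p = 1 := by
  have hL1 : (1:ℝ) ≤ (L:ℝ) := by exact_mod_cast Nat.one_le_of_lt hL
  -- fL is continuous (everywhere, via the geometric-sum formula)
  have hfLfun : fL L = fun x : ℝ => ∑ j ∈ Finset.range L, (1-x)^j := funext (fL_eq_sum L)
  have hcfL : Continuous (fL L) := by
    rw [hfLfun]
    exact continuous_finset_sum _ (fun j _ => (continuous_const.sub continuous_id).pow j)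
  have hanti : StrictAntiOn (fL L) (Set.Icc (0:ℝ) 1) := fL_anti hL
  have hmem : ∀ x ∈ Set.Icc (0:ℝ) 1, fL L x ∈ Set.Icc (1:ℝ) (L:ℝ) := fun x hx => fL_mem hL hx
  have hfL0 : fL L 0 = (L:ℝ) := by simp [fL]
  have hfL1 : fL L 1 = 1 := by
    simp [fL, zero_pow (by omega : L ≠ 0)]
  have hfinvL : finv (L:ℝ) = 0 := by
    rw [← hfL0]; exact hinv1 0 ⟨le_rfl, zero_le_one⟩
  -- finv is antitone on [1, L]
  have hfinv_anti : AntitoneOn finv (Set.Icc (1:ℝ) (L:ℝ)) := by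
    intro a ha b hb hab
    by_contra hcon
    push_neg at hcon
    have := hanti (hinv3 ha) (hinv3 hb) hcon
    rw [hinv2 a ha, hinv2 b hb] at this
    linarith
  -- finv is continuous on [1, L] (inverse of continuous bijection on compact)
  have hfinv_cont : ContinuousOn finv (Set.Icc (1:ℝ) (L:ℝ)) := by
    let e : Set.Icc (0:ℝ) 1 ≃ Set.Icc (1:ℝ) (L:ℝ) :=
      { toFun := fun x => ⟨fL L x, hmem x x.2⟩
        invFun := fun y => ⟨finv y, hinv3 y.2⟩
        left_inv := fun x => Subtype.ext (hinv1 x x.2)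
        right_inv := fun y => Subtype.ext (hinv2 y y.2) }
    have hce : Continuous e := Continuous.subtype_mk (hcfL.comp continuous_subtype_val) _
    have hcsymm : Continuous e.symm := (hce.homeoOfEquivCompactToT2 (f := e)).symm.continuous
    rw [continuousOn_iff_continuous_restrict]
    exact continuous_subtype_val.comp hcsymm
  -- f0inv equals finv ∘ (min · L) on [1, ∞)
  have hf0eq : ∀ y ∈ Set.Ici (1:ℝ), f0inv y = finv (min y (L:ℝ)) := by
    intro y _
    rw [hf0]
    split_ifs with hyL
    · rw [min_eq_left hyL]
    · rw [min_eq_right (le_of_not_ge hyL), hfinvL]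
  have hminmem : ∀ y ∈ Set.Ici (1:ℝ), min y (L:ℝ) ∈ Set.Icc (1:ℝ) (L:ℝ) :=
    fun y hy => ⟨le_min hy hL1, min_le_right _ _⟩
  have hf0_anti : AntitoneOn f0inv (Set.Ici (1:ℝ)) := by
    intro a ha b hb hab
    rw [hf0eq a ha, hf0eq b hb]
    exact hfinv_anti (hminmem a ha) (hminmem b hb) (min_le_min hab le_rfl)
  have hf0_cont : ContinuousOn f0inv (Set.Ici (1:ℝ)) := by
    apply ContinuousOn.congr (f := fun y => finv (min y (L:ℝ)))
    · exact hfinv_cont.comp ((continuous_id.min continuous_const).continuousOn) hminmem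
    · exact hf0eq
  have hf0_nonneg : ∀ y ∈ Set.Ici (1:ℝ), 0 ≤ f0inv y := by
    intro y hy
    rw [hf0eq y hy]
    exact (hinv3 (hminmem y hy)).1
  -- coefficients
  set c : Fin (K-1) → ℝ := fun i => s ⟨K-1, by omega⟩ / s (Fin.castLE (by omega) i) with hc
  have hspos : ∀ i : Fin K, 0 < s i := by
    intro i
    refine lt_of_lt_of_le hpos (hmono ?_)
    rw [Fin.le_def]
    exact Nat.zero_le _
  have hc1 : ∀ i, 1 ≤ c i := by
    intro i
    rw [hc, le_div_iff₀ (hspos _), one_mul]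
    refine hmono ?_
    have := i.isLt
    rw [Fin.le_def]
    simp only [Fin.coe_castLE]
    omega
  have hcmapsTo : ∀ i, Set.MapsTo (fun p => c i * fL L p) (Set.Icc (0:ℝ) 1) (Set.Ici (1:ℝ)) := by
    intro i p hp
    have h1 := (hmem p hp).1
    have := hc1 i
    simp only [Set.mem_Ici]
    nlinarith
  -- term monotonicity and continuity
  have hterm_mono : ∀ i, ∀ p ∈ Set.Icc (0:ℝ) 1, ∀ q ∈ Set.Icc (0:ℝ) 1, p ≤ q →
      f0inv (c i * fL L p) ≤ f0inv (c i * fL L q) := by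
    intro i p hp q hq hpq
    apply hf0_anti (hcmapsTo i hq) (hcmapsTo i hp)
    apply mul_le_mul_of_nonneg_left _ (by linarith [hc1 i])
    exact hanti.antitoneOn hp hq hpq
  have hterm_cont : ∀ i : Fin (K-1),
      ContinuousOn (fun p => f0inv (c i * fL L p)) (Set.Icc (0:ℝ) 1) := by
    intro i
    exact hf0_cont.comp ((continuous_const.mul hcfL).continuousOn) (hcmapsTo i)
  -- continuity of h
  have Hcont : ContinuousOn h (Set.Icc (0:ℝ) 1) := by
    apply ContinuousOn.congr (f := fun p => p + ∑ i : Fin (K-1), f0inv (c i * fL L p))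
    · exact continuousOn_id.add (continuousOn_finset_sum _ (fun i _ => hterm_cont i))
    · intro p _; exact hh p
  -- strict monotonicity of h
  have Hmono : StrictMonoOn h (Set.Icc (0:ℝ) 1) := by
    intro p hp q hq hpq
    rw [hh p, hh q]
    apply add_lt_add_of_lt_of_le hpq
    exact Finset.sum_le_sum (fun i _ => hterm_mono i p hp q hq hpq.le)
  -- h 0 = 0
  have H0 : h 0 = 0 := by
    rw [hh 0]
    have : ∀ i : Fin (K-1), f0inv (c i * fL L 0) = 0 := by
      intro i
      have hmy : c i * (L:ℝ) ∈ Set.Ici (1:ℝ) := by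
        simp only [Set.mem_Ici]; nlinarith [hc1 i]
      rw [hfL0, hf0eq _ hmy]
      rw [min_eq_right (by nlinarith [hc1 i]), hfinvL]
    simp only [zero_add]; exact Finset.sum_eq_zero (fun i _ => this i)
  -- 1 ≤ h 1
  have H1 : 1 ≤ h 1 := by
    rw [hh 1]
    have : ∀ i : Fin (K-1), 0 ≤ f0inv (c i * fL L 1) := by
      intro i
      refine hf0_nonneg _ ?_
      simp only [Set.mem_Ici, hfL1, mul_one]
      exact hc1 i
    have hs : 0 ≤ ∑ i : Fin (K-1), f0inv (c i * fL L 1) :=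
      Finset.sum_nonneg (fun i _ => this i)
    linarith
  refine ⟨Hcont, Hmono, H0, H1, ?_⟩
  obtain ⟨p, hp, hpv⟩ := intermediate_value_Icc zero_le_one Hcont
    (by rw [H0]; exact ⟨zero_le_one, H1⟩)
  have hpne : p ≠ 0 := by
    intro hp0
    rw [hp0, H0] at hpv
    norm_num at hpv
  refine ⟨p, ⟨⟨lt_of_le_of_ne hp.1 (Ne.symm hpne), hp.2⟩, hpv⟩, ?_⟩
  rintro q ⟨⟨hq0, hq1⟩, hqv⟩
  exact Hmono.injOn ⟨hq0.le, hq1⟩ hp (hqv.trans hpv.symm)
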